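/- Let H be a finite abelian group (written multiplicatively) and let q : ℕ → H → ℝ[x,x⁻¹] be such that each q_{j,g} has nonnegative coefficients, Σ_{g∈H} q_{j,g}(1) = 1 for every j, and q_{j,g} = q_{j,g⁻¹} for all j and g (the symmetric case). Suppose that for every maximal proper subgroup K of H the series Σ_j (Σ_{g ∈ H : g² ∉ K} q_{j,g}(1)) diverges. Then the sequence is hollow: for every character α ≠ 1 of H and every j₀ ≥ 0, the l¹ norms ‖∏_{j=j₀}^{j₀+d} p_{α,j}‖₁ tend to 0 as d → ∞, where p_{α,j} := Σ_{g∈H} α(g⁻¹)·q_{j,g} ∈ ℂ[x,x⁻¹]. -/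

import Mathlib

open Finsupp Filter

/-- The coefficients of a real Laurent polynomial. -/
def lcoeff (p : AddMonoidAlgebra ℝ ℤ) : ℤ →₀ ℝ := p.coeff

/-- The coefficients of a complex Laurent polynomial. -/
def lcoeffC (p : AddMonoidAlgebra ℂ ℤ) : ℤ →₀ ℂ := p.coeff

/-- The `l¹` norm of a complex Laurent polynomial. -/
noncomputable def l1C (p : AddMonoidAlgebra ℂ ℤ) : ℝ := (lcoeffC p).sum fun _ c => ‖c‖

/-- Evaluation of a real Laurent polynomial at `x = 1`. -/
noncomputable def ev1 (p : AddMonoidAlgebra ℝ ℤ) : ℝ := (lcoeff p).sum fun _ c => c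

/-- A real Laurent polynomial viewed as a complex Laurent polynomial. -/
noncomputable def toC (p : AddMonoidAlgebra ℝ ℤ) : AddMonoidAlgebra ℂ ℤ :=
  AddMonoidAlgebra.ofCoeff (Finsupp.mapRange (fun r : ℝ => (r : ℂ)) Complex.ofReal_zero (lcoeff p))

lemma l1C_eq_sum (p : AddMonoidAlgebra ℂ ℤ) {t : Finset ℤ} (h : p.coeff.support ⊆ t) :
    l1C p = ∑ m ∈ t, ‖p.coeff m‖ := by
  rw [l1C, lcoeffC, Finsupp.sum]
  exact Finset.sum_subset h (fun x _ hx => by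
    simp [Finsupp.notMem_support_iff.mp hx])

lemma l1C_nonneg (p : AddMonoidAlgebra ℂ ℤ) : 0 ≤ l1C p := by
  rw [l1C_eq_sum p (le_refl _)]
  exact Finset.sum_nonneg fun _ _ => norm_nonneg _

lemma l1C_add_le (p r : AddMonoidAlgebra ℂ ℤ) : l1C (p + r) ≤ l1C p + l1C r := by
  rw [l1C_eq_sum (p + r) (t := p.coeff.support ∪ r.coeff.support) Finsupp.support_add,
    l1C_eq_sum p (Finset.subset_union_left), l1C_eq_sum r (Finset.subset_union_right),
    ← Finset.sum_add_distrib]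
  exact Finset.sum_le_sum fun m _ => by
    simpa [AddMonoidAlgebra.coeff_add] using norm_add_le (p.coeff m) (r.coeff m)

lemma l1C_smul (c : ℂ) (p : AddMonoidAlgebra ℂ ℤ) : l1C (c • p) = ‖c‖ * l1C p := by
  rw [l1C_eq_sum (c • p) (t := p.coeff.support) (Finsupp.support_smul),
    l1C_eq_sum p (le_refl _), Finset.mul_sum]
  exact Finset.sum_congr rfl fun m _ => by rw [AddMonoidAlgebra.coeff_smul, Finsupp.smul_apply, smul_eq_mul, norm_mul]

lemma l1C_sum_le {ι : Type*} (s : Finset ι) (f : ι → AddMonoidAlgebra ℂ ℤ) :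
    l1C (∑ i ∈ s, f i) ≤ ∑ i ∈ s, l1C (f i) := by
  classical
  induction s using Finset.cons_induction with
  | empty => simp [l1C, lcoeffC]
  | cons a s ha ih =>
    rw [Finset.sum_cons, Finset.sum_cons]
    exact (l1C_add_le _ _).trans (by linarith)

lemma l1C_single (a : ℤ) (c : ℂ) : l1C (AddMonoidAlgebra.single a c) = ‖c‖ := by
  rw [l1C, lcoeffC, AddMonoidAlgebra.coeff_single]
  exact Finsupp.sum_single_index (norm_zero)

lemma l1C_mul_le (p r : AddMonoidAlgebra ℂ ℤ) : l1C (p * r) ≤ l1C p * l1C r := by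
  classical
  rw [AddMonoidAlgebra.mul_def]
  unfold Finsupp.sum
  calc l1C (∑ a ∈ p.coeff.support, ∑ b ∈ r.coeff.support, AddMonoidAlgebra.single (a + b) (p.coeff a * r.coeff b))
      ≤ ∑ a ∈ p.coeff.support, l1C (∑ b ∈ r.coeff.support, AddMonoidAlgebra.single (a + b) (p.coeff a * r.coeff b)) :=
        l1C_sum_le _ _
    _ ≤ ∑ a ∈ p.coeff.support, ∑ b ∈ r.coeff.support, l1C (AddMonoidAlgebra.single (a + b) (p.coeff a * r.coeff b)) :=
        Finset.sum_le_sum fun a _ => l1C_sum_le _ _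
    _ = ∑ a ∈ p.coeff.support, ∑ b ∈ r.coeff.support, ‖p.coeff a‖ * ‖r.coeff b‖ :=
        Finset.sum_congr rfl fun a _ => Finset.sum_congr rfl fun b _ => by
          rw [l1C_single, norm_mul]
    _ = l1C p * l1C r := by
        rw [l1C_eq_sum p (le_refl _), l1C_eq_sum r (le_refl _), Finset.sum_mul_sum]

lemma l1C_one : l1C (1 : AddMonoidAlgebra ℂ ℤ) = 1 := by
  have : (1 : AddMonoidAlgebra ℂ ℤ) = AddMonoidAlgebra.single 0 1 := rfl
  rw [this, l1C_single]; simp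

lemma l1C_prod_le {ι : Type*} (s : Finset ι) (f : ι → AddMonoidAlgebra ℂ ℤ) :
    l1C (∏ i ∈ s, f i) ≤ ∏ i ∈ s, l1C (f i) := by
  classical
  induction s using Finset.cons_induction with
  | empty => simp [l1C_one]
  | cons a s ha ih =>
    rw [Finset.prod_cons, Finset.prod_cons]
    refine (l1C_mul_le _ _).trans ?_
    exact mul_le_mul_of_nonneg_left ih (l1C_nonneg _) |>.trans
      (le_refl _) |>.trans (le_refl _)

lemma ev1_nonneg {p : AddMonoidAlgebra ℝ ℤ} (h : ∀ m, 0 ≤ lcoeff p m) : 0 ≤ ev1 p :=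
  Finset.sum_nonneg fun m _ => h m

lemma l1C_toC {p : AddMonoidAlgebra ℝ ℤ} (h : ∀ m, 0 ≤ lcoeff p m) :
    l1C (toC p) = ev1 p := by
  rw [l1C_eq_sum (toC p) (t := (lcoeff p).support) (Finsupp.support_mapRange (hf := Complex.ofReal_zero)), ev1, Finsupp.sum]
  refine Finset.sum_congr rfl fun m _ => ?_
  have : (toC p).coeff m = ((lcoeff p m : ℝ) : ℂ) := rfl
  rw [this, Complex.norm_real, Real.norm_eq_abs, abs_of_nonneg (h m)]

lemma char_symm_sum {H : Type} [CommGroup H] [Fintype H] (α : H →* ℂ)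
    (c : H → AddMonoidAlgebra ℂ ℤ) (hc : ∀ g, c g = c g⁻¹)
    (hinv : ∀ g, α g⁻¹ = (starRingEnd ℂ) (α g)) :
    ∑ g, α g⁻¹ • c g = ∑ g, (((α g).re : ℂ)) • c g := by
  have hST : ∑ g, α g⁻¹ • c g = ∑ g, α g • c g := by
    refine Fintype.sum_equiv (Equiv.inv H) _ _ fun g => ?_
    simp only [Equiv.inv_apply]
    rw [← hc g]
  have h2 : (2 : ℂ) • (∑ g, α g⁻¹ • c g) = ∑ g, (α g⁻¹ + α g) • c g := by
    rw [two_smul]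
    nth_rewrite 2 [hST]
    rw [← Finset.sum_add_distrib]
    exact Finset.sum_congr rfl fun g _ => (add_smul _ _ _).symm
  have h3 : ∑ g, (α g⁻¹ + α g) • c g = (2 : ℂ) • ∑ g, (((α g).re : ℂ)) • c g := by
    rw [Finset.smul_sum]
    refine Finset.sum_congr rfl fun g _ => ?_
    rw [hinv g, smul_smul]
    congr 1
    rw [add_comm, Complex.add_conj]
    push_cast
    ring
  have h4 := h2.trans h3
  exact smul_right_injective _ (by norm_num : (2:ℂ) ≠ 0) h4

open scoped Classical in
/-- Proposition 2.3 (first assertion): a symmetric sequence (`q_{j,g} = q_{j,g⁻¹}`) of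
hemicirculant coefficient families is hollow provided that for every maximal proper
subgroup `K` of `H` the series `∑_j ∑_{g : g² ∉ K} q_{j,g}(1)` diverges. -/
theorem symmetric_hollowness_criterion {H : Type} [CommGroup H] [Fintype H]
    (q : ℕ → H → AddMonoidAlgebra ℝ ℤ)
    (hpos : ∀ j g m, 0 ≤ lcoeff (q j g) m)
    (hsum : ∀ j, ∑ g, ev1 (q j g) = 1)
    (hsymm : ∀ j g, q j g = q j g⁻¹)
    (hdiv : ∀ K : Subgroup H, IsCoatom K →
      ¬ Summable (fun j => ∑ g, if g ^ 2 ∈ K then 0 else ev1 (q j g))) :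
    ∀ α : H →* ℂ, α ≠ 1 → ∀ j₀ : ℕ,
      Tendsto
        (fun d => l1C (∏ j ∈ Finset.Icc j₀ (j₀ + d), ∑ g, α g⁻¹ • toC (q j g)))
        atTop (nhds 0) := by
  intro α hα j₀
  -- kernel is a proper subgroup
  have hker : α.ker ≠ ⊤ := by
    intro h
    apply hα
    ext g
    have : g ∈ α.ker := h ▸ Subgroup.mem_top g
    simpa [MonoidHom.mem_ker] using this
  obtain ⟨K, hK, hle⟩ := (eq_top_or_exists_le_coatom α.ker).resolve_left hker
  -- characters have norm one
  have hnorm : ∀ g : H, ‖α g‖ = 1 := by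
    intro g
    refine Complex.norm_eq_one_of_pow_eq_one (n := Fintype.card H) ?_ Fintype.card_ne_zero
    rw [← map_pow, pow_card_eq_one, map_one]
  have hinv : ∀ g : H, α g⁻¹ = (starRingEnd ℂ) (α g) := by
    intro g
    have hne : α g ≠ 0 := by
      intro h
      have := hnorm g
      rw [h] at this
      simp at this
    have h1 : α g * α g⁻¹ = 1 := by rw [← map_mul, mul_inv_cancel, map_one]
    have h2 : α g * (starRingEnd ℂ) (α g) = 1 := by
      rw [Complex.mul_conj, ← Complex.sq_norm, hnorm g]
      norm_num
    exact mul_left_cancel₀ hne (h1.trans h2.symm)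
  set s : ℕ → ℝ := fun j => ∑ g, if g ^ 2 ∈ K then 0 else ev1 (q j g) with hs
  have hev : ∀ j g, 0 ≤ ev1 (q j g) := fun j g => ev1_nonneg (hpos j g)
  have hs0 : ∀ j, 0 ≤ s j := fun j =>
    Finset.sum_nonneg fun g _ => by split <;> simp [hev j g, le_refl]
  have hs1 : ∀ j, s j ≤ 1 := by
    intro j
    rw [← hsum j]
    refine Finset.sum_le_sum fun g _ => ?_
    split <;> simp [hev j g, le_refl]
  -- the filter set is nonempty
  have hSne : ∃ g : H, g ^ 2 ∉ K := by
    by_contra h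
    push_neg at h
    refine hdiv K hK ?_
    have : (fun j => ∑ g : H, if g ^ 2 ∈ K then 0 else ev1 (q j g)) = fun _ => (0:ℝ) := by
      funext j
      exact Finset.sum_eq_zero fun g _ => by simp [h g]
    rw [this]
    exact summable_zero
  set Sf : Finset H := Finset.univ.filter (fun g => g ^ 2 ∉ K) with hSf
  have hSfne : Sf.Nonempty := by
    obtain ⟨g, hg⟩ := hSne
    exact ⟨g, by simp [hSf, hg]⟩
  set δ : ℝ := Sf.sup' hSfne (fun g => |(α g).re|) with hδ
  have hδ0 : 0 ≤ δ := by
    obtain ⟨g, hg⟩ := hSfne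
    rw [hδ]
    exact le_trans (abs_nonneg _) (Finset.le_sup' (fun g => |(α g).re|) hg)
  have hδ1 : δ < 1 := by
    rw [hδ, Finset.sup'_lt_iff]
    intro g hg
    have hg2 : g ^ 2 ∉ K := by simpa [hSf] using hg
    have hle' : |(α g).re| ≤ 1 := by
      have := Complex.abs_re_le_norm (α g)
      rwa [hnorm g] at this
    rcases lt_or_eq_of_le hle' with h | h
    · exact h
    · exfalso
      have hnsq : (α g).re * (α g).re + (α g).im * (α g).im = 1 := by
        have := Complex.sq_norm (α g)
        rw [hnorm g] at this
        simpa [Complex.normSq_apply] using this.symm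
      have hre2 : (α g).re ^ 2 = 1 := by
        have := sq_abs (α g).re
        rw [h] at this
        linarith [this]
      have him : (α g).im = 0 := by nlinarith
      have hαg : α g = ((α g).re : ℂ) := by
        apply Complex.ext <;> simp [him]
      have : α (g ^ 2) = 1 := by
        rw [map_pow, hαg, ← Complex.ofReal_pow, hre2, Complex.ofReal_one]
      exact hg2 (hle (MonoidHom.mem_ker.mpr this))
  -- per-factor bound
  have hfac : ∀ j, l1C (∑ g, α g⁻¹ • toC (q j g)) ≤ 1 - (1 - δ) * s j := by
    intro j
    rw [char_symm_sum α (fun g => toC (q j g))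
      (fun g => congrArg toC (hsymm j g)) hinv]
    calc l1C (∑ g, (((α g).re : ℂ)) • toC (q j g))
        ≤ ∑ g, l1C ((((α g).re : ℂ)) • toC (q j g)) := l1C_sum_le _ _
      _ = ∑ g, |(α g).re| * ev1 (q j g) := by
          refine Finset.sum_congr rfl fun g _ => ?_
          rw [l1C_smul, l1C_toC (hpos j g), Complex.norm_real, Real.norm_eq_abs]
      _ ≤ ∑ g, (ev1 (q j g) - (1 - δ) * (if g ^ 2 ∈ K then 0 else ev1 (q j g))) := by
          refine Finset.sum_le_sum fun g _ => ?_
          by_cases hg : g ^ 2 ∈ K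
          · simp only [hg, if_true, mul_zero, sub_zero]
            calc |(α g).re| * ev1 (q j g) ≤ 1 * ev1 (q j g) := by
                  refine mul_le_mul_of_nonneg_right ?_ (hev j g)
                  have := Complex.abs_re_le_norm (α g)
                  rwa [hnorm g] at this
              _ = ev1 (q j g) := one_mul _
          · simp only [hg, if_false]
            have hgS : g ∈ Sf := by rw [hSf]; simp [hg]
            have hd : |(α g).re| ≤ δ := by
              rw [hδ]; exact Finset.le_sup' (fun g => |(α g).re|) hgS
            nlinarith [hev j g]
      _ = 1 - (1 - δ) * s j := by
          rw [Finset.sum_sub_distrib, hsum j, ← Finset.mul_sum]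
  -- the partial sums tend to infinity
  have hT : Tendsto (fun n => ∑ i ∈ Finset.range n, s i) atTop atTop :=
    (not_summable_iff_tendsto_nat_atTop_of_nonneg hs0).mp (hdiv K hK)
  -- product bound
  have hone : ∀ j, (1 - δ) * s j ≤ 1 := by
    intro j
    nlinarith [hs0 j, hs1 j]
  have hbound : ∀ d, l1C (∏ j ∈ Finset.Icc j₀ (j₀ + d), ∑ g, α g⁻¹ • toC (q j g))
      ≤ Real.exp (-((1 - δ) * ∑ j ∈ Finset.Icc j₀ (j₀ + d), s j)) := by
    intro d
    calc l1C (∏ j ∈ Finset.Icc j₀ (j₀ + d), ∑ g, α g⁻¹ • toC (q j g))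
        ≤ ∏ j ∈ Finset.Icc j₀ (j₀ + d), l1C (∑ g, α g⁻¹ • toC (q j g)) := l1C_prod_le _ _
      _ ≤ ∏ j ∈ Finset.Icc j₀ (j₀ + d), (1 - (1 - δ) * s j) :=
          Finset.prod_le_prod (fun j _ => l1C_nonneg _) (fun j _ => hfac j)
      _ ≤ ∏ j ∈ Finset.Icc j₀ (j₀ + d), Real.exp (-((1 - δ) * s j)) := by
          refine Finset.prod_le_prod (fun j _ => by linarith [hone j]) (fun j _ => ?_)
          have := Real.add_one_le_exp (-((1 - δ) * s j))
          linarith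
      _ = Real.exp (-((1 - δ) * ∑ j ∈ Finset.Icc j₀ (j₀ + d), s j)) := by
          rw [← Real.exp_sum]
          congr 1
          rw [Finset.sum_neg_distrib, ← Finset.mul_sum]
  -- conclude
  have hA : Tendsto (fun d => ∑ j ∈ Finset.Icc j₀ (j₀ + d), s j) atTop atTop := by
    have heq : ∀ d, ∑ j ∈ Finset.Icc j₀ (j₀ + d), s j
        = (∑ i ∈ Finset.range (j₀ + d + 1), s i) - ∑ i ∈ Finset.range j₀, s i := by
      intro d
      rw [← Finset.Ico_add_one_right_eq_Icc, Finset.sum_Ico_eq_sub _ (by omega)]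
    simp only [heq]
    have hcomp : Tendsto (fun d => j₀ + d + 1) atTop atTop :=
      tendsto_atTop_mono (fun d => le_trans (Nat.le_add_left d j₀) (Nat.le_succ _)) tendsto_id
    simpa [sub_eq_add_neg] using
      tendsto_atTop_add_const_right atTop (-(∑ i ∈ Finset.range j₀, s i)) (hT.comp hcomp)
  have hexp : Tendsto (fun d => Real.exp (-((1 - δ) * ∑ j ∈ Finset.Icc j₀ (j₀ + d), s j)))
      atTop (nhds 0) := by
    refine Real.tendsto_exp_atBot.comp ?_
    have := hA.const_mul_atTop (by linarith : (0:ℝ) < 1 - δ)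
    exact tendsto_neg_atTop_atBot.comp this
  exact squeeze_zero (fun d => l1C_nonneg _) hbound hexp
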